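/- Let Λ be a commutative ring, let G = SL2(E), U = SL2(O_E), U' = diag(1, π)·SL2(O_E)·diag(1, π)^{−1}, and Γ_0 = U ∩ U'. For an open subgroup H ≤ G, let Λ[H\G] denote the Λ-module of finitely supported functions H\G → Λ, with G acting by right translation on the cosets. Then the sequence of Λ[G]-modules 0 → Λ[Γ_0\G] →^δ Λ[U\G] ⊕ Λ[U'\G] →^Σ Λ → 0 is exact, where δ sends the indicator function of a coset Γ_0 g to (indicator of U g, −(indicator of U' g)), Σ sends a pair of finitely supported functions to the sum of all of their values, and G acts trivially on Λ. (This is the augmented cellular chain complex of the Bruhat–Tits tree of SL2(E), giving a resolution of the trivial module Λ by compactly induced modules.) -/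

import Mathlib

noncomputable section

open Matrix

/-- A surjective discrete (rank-one) valuation on a field `E`, written additively.
This is the algebraic structure of a nonarchimedean local field used in the statements. -/
structure DiscreteVal (E : Type) [Field E] : Type where
  v : E → ℤ
  v_mul : ∀ x y : E, x ≠ 0 → y ≠ 0 → v (x * y) = v x + v y
  v_min_le_add : ∀ x y : E, x ≠ 0 → y ≠ 0 → x + y ≠ 0 → min (v x) (v y) ≤ v (x + y)
  surj : ∀ n : ℤ, ∃ x : E, x ≠ 0 ∧ v x = n

namespace DiscreteVal

variable {E : Type} [Field E]

/-- The valuation ring `O_E = {x : x = 0 or v x ≥ 0}`. -/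
def O (ν : DiscreteVal E) : Set E := {x : E | x = 0 ∨ 0 ≤ ν.v x}

/-- `π` is a uniformizer: `π ≠ 0` and `v π = 1`. -/
def IsUniformizer (ν : DiscreteVal E) (π : E) : Prop := π ≠ 0 ∧ ν.v π = 1

/-- The set `π^m · O_E` for `m : ℤ`. -/
def ball (ν : DiscreteVal E) (π : E) (m : ℤ) : Set E :=
  {y : E | ∃ z ∈ ν.O, y = π ^ m * z}

end DiscreteVal

section ProjLine

variable {E : Type} [Field E]

/-- The point `[a : b]` of the projective line over `E`. -/
def projPt (a b : E) (h : a ≠ 0 ∨ b ≠ 0) : Projectivization E (Fin 2 → E) :=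
  Projectivization.mk E ![a, b] (by
    intro hc
    rcases h with h | h
    · exact h (by simpa using congrFun hc 0)
    · exact h (by simpa using congrFun hc 1))

/-- The point `∞ = [0 : 1]`. -/
def inftyPt (E : Type) [Field E] : Projectivization E (Fin 2 → E) :=
  projPt 0 1 (Or.inr one_ne_zero)

/-- The point `[1 : t]`. -/
def onePt (t : E) : Projectivization E (Fin 2 → E) :=
  projPt 1 t (Or.inl one_ne_zero)

theorem vecMulLinear_injective (g : SpecialLinearGroup (Fin 2) E) :
    Function.Injective (g.1.vecMulLinear) := by
  intro x y hxy
  have h1 : x ᵥ* g.1 = y ᵥ* g.1 := by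
    simpa [Matrix.vecMulLinear_apply] using hxy
  have h3 : g.1 * (g⁻¹).1 = 1 := by
    rw [← Matrix.SpecialLinearGroup.coe_mul, mul_inv_cancel, Matrix.SpecialLinearGroup.coe_one]
  calc x = x ᵥ* (g.1 * (g⁻¹).1) := by rw [h3, Matrix.vecMul_one]
    _ = (x ᵥ* g.1) ᵥ* (g⁻¹).1 := (Matrix.vecMul_vecMul x g.1 (g⁻¹).1).symm
    _ = (y ᵥ* g.1) ᵥ* (g⁻¹).1 := by rw [h1]
    _ = y ᵥ* (g.1 * (g⁻¹).1) := Matrix.vecMul_vecMul y g.1 (g⁻¹).1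
    _ = y := by rw [h3, Matrix.vecMul_one]

/-- The right action `[w] · g := [w ᵥ* g]` of `SL₂(E)` on the projective line
(rows vectors times matrix). -/
def ract (x : Projectivization E (Fin 2 → E)) (g : SpecialLinearGroup (Fin 2) E) :
    Projectivization E (Fin 2 → E) :=
  Projectivization.map (g.1.vecMulLinear) (vecMulLinear_injective g) x

/-- The orbit of `x` under a set `Γ` of elements of `SL₂(E)` (acting on the right). -/
def orbitOf (Γ : Set (SpecialLinearGroup (Fin 2) E))
    (x : Projectivization E (Fin 2 → E)) : Set (Projectivization E (Fin 2 → E)) :=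
  {y | ∃ g ∈ Γ, y = ract x g}

variable (ν : DiscreteVal E) (π : E)

/-- The principal congruence subgroup `Γ_k` of level `k` (as a subset of `SL₂(E)`):
integral matrices congruent to the identity modulo `π^k`. -/
def congrSub (k : ℕ) : Set (SpecialLinearGroup (Fin 2) E) :=
  {g | ∀ i j, g.1 i j - (1 : Matrix (Fin 2) (Fin 2) E) i j ∈ ν.ball π (k : ℤ)}

/-- The maximal compact subgroup `U = SL₂(O_E)` (as a subset of `SL₂(E)`). -/
def slIntegral : Set (SpecialLinearGroup (Fin 2) E) :=
  {g | ∀ i j, g.1 i j ∈ ν.O}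

/-- The Iwahori subgroup `Γ₀` (as a subset): integral matrices whose
lower-left entry lies in `πO_E`. -/
def iwahori : Set (SpecialLinearGroup (Fin 2) E) :=
  {g | (∀ i j, g.1 i j ∈ ν.O) ∧ g.1 1 0 ∈ ν.ball π 1}

/-- The subgroup `U' = diag(1,π) SL₂(O_E) diag(1,π)⁻¹` (as a subset), described
by entry conditions. -/
def slConj : Set (SpecialLinearGroup (Fin 2) E) :=
  {g | g.1 0 0 ∈ ν.O ∧ g.1 1 1 ∈ ν.O ∧ g.1 0 1 ∈ ν.ball π (-1) ∧ g.1 1 0 ∈ ν.ball π 1}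

end ProjLine

/-!
STATEMENT 12: Let `Λ` be a commutative ring, `G = SL₂(E)`, `U = SL₂(O_E)`,
`U' = diag(1,π)·SL₂(O_E)·diag(1,π)⁻¹` and `Γ₀ = U ∩ U'`.  For an open subgroup
`H ≤ G` let `Λ[H\G]` be the `Λ`-module of finitely supported functions on `H\G`,
with `G` acting by right translation.  Then the sequence
`0 → Λ[Γ₀\G] →δ Λ[U\G] ⊕ Λ[U'\G] →Σ Λ → 0`
is exact, where `δ` sends the indicator of the coset `Γ₀g` to
`(indicator of Ug, −(indicator of U'g))`, `Σ` is the sum of all values, and `G`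
acts trivially on `Λ`; moreover `δ` and `Σ` are `G`-equivariant.
(This is the augmented cellular chain complex of the Bruhat–Tits tree.)
-/

section Statement12

variable {E : Type} [Field E]

/-- Right-coset equivalence for a subset `H`: `g ~ g'` iff `g' = h g`, `h ∈ H`. -/
def cosetRel (H : Set (SpecialLinearGroup (Fin 2) E))
    (g g' : SpecialLinearGroup (Fin 2) E) : Prop :=
  ∃ h ∈ H, g' = h * g

/-- The right coset space `H\G`. -/
def CosetSpace (H : Set (SpecialLinearGroup (Fin 2) E)) : Type :=
  Quot (cosetRel H)

/-- The coset `Hg`. -/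
def cosetMk (H : Set (SpecialLinearGroup (Fin 2) E))
    (g : SpecialLinearGroup (Fin 2) E) : CosetSpace H :=
  Quot.mk (cosetRel H) g

/-- Right translation of `G` on `H\G`. -/
def cosetTrans (H : Set (SpecialLinearGroup (Fin 2) E))
    (g₀ : SpecialLinearGroup (Fin 2) E) : CosetSpace H → CosetSpace H :=
  Quot.map (fun g => g * g₀) (by
    rintro a b ⟨h, hh, rfl⟩
    exact ⟨h, hh, mul_assoc _ _ _⟩)

/-- The right translation action of `G` on `Λ[H\G]`. -/
def transF (Λ : Type) [CommRing Λ] (H : Set (SpecialLinearGroup (Fin 2) E))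
    (g₀ : SpecialLinearGroup (Fin 2) E) :
    (CosetSpace H →₀ Λ) → (CosetSpace H →₀ Λ) :=
  Finsupp.mapDomain (cosetTrans H g₀)

/-- Projection `Γ₀\G → U\G` (using `Γ₀ = U ∩ U'`). -/
def projToU (ν : DiscreteVal E) (π : E) :
    CosetSpace (slIntegral ν ∩ slConj ν π) → CosetSpace (slIntegral ν) :=
  Quot.map id (by rintro a b ⟨h, hh, rfl⟩; exact ⟨h, hh.1, rfl⟩)

/-- Projection `Γ₀\G → U'\G`. -/
def projToU' (ν : DiscreteVal E) (π : E) :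
    CosetSpace (slIntegral ν ∩ slConj ν π) → CosetSpace (slConj ν π) :=
  Quot.map id (by rintro a b ⟨h, hh, rfl⟩; exact ⟨h, hh.2, rfl⟩)

/-- The boundary map `δ : Λ[Γ₀\G] → Λ[U\G] ⊕ Λ[U'\G]`, the `Λ`-linear extension of
`indicator of Γ₀g ↦ (indicator of Ug, −(indicator of U'g))`. -/
def deltaMap (Λ : Type) [CommRing Λ] (ν : DiscreteVal E) (π : E) :
    (CosetSpace (slIntegral ν ∩ slConj ν π) →₀ Λ) →
      (CosetSpace (slIntegral ν) →₀ Λ) × (CosetSpace (slConj ν π) →₀ Λ) :=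
  fun f => (Finsupp.mapDomain (projToU ν π) f, - Finsupp.mapDomain (projToU' ν π) f)

/-- The augmentation `Σ : Λ[U\G] ⊕ Λ[U'\G] → Λ`, the sum of all values. -/
def sigmaMap (Λ : Type) [CommRing Λ] (ν : DiscreteVal E) (π : E) :
    (CosetSpace (slIntegral ν) →₀ Λ) × (CosetSpace (slConj ν π) →₀ Λ) → Λ :=
  fun x => (x.1.sum fun _ a => a) + (x.2.sum fun _ a => a)

/-! ### Auxiliary development -/

namespace DiscreteVal

variable (ν : DiscreteVal E)

open scoped Classical in
/-- The valuation extended by `⊤` at `0`. -/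
def Vv (x : E) : WithTop ℤ := if x = 0 then ⊤ else (ν.v x : WithTop ℤ)

lemma Vv_zero : ν.Vv 0 = ⊤ := by simp [Vv]

variable {ν}

lemma Vv_of_ne {x : E} (h : x ≠ 0) : ν.Vv x = (ν.v x : WithTop ℤ) := by simp [Vv, h]

lemma Vv_eq_top_iff {x : E} : ν.Vv x = ⊤ ↔ x = 0 := by
  constructor
  · intro h; by_contra hx; rw [Vv_of_ne hx] at h; exact WithTop.coe_ne_top h
  · rintro rfl; exact ν.Vv_zero

lemma Vv_ne_top {x : E} (h : x ≠ 0) : ν.Vv x ≠ ⊤ := fun hc => h (Vv_eq_top_iff.1 hc)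

lemma ne_zero_of_Vv_ne_top {x : E} (h : ν.Vv x ≠ ⊤) : x ≠ 0 :=
  fun hc => h (by rw [hc]; exact ν.Vv_zero)

lemma v_one : ν.v 1 = 0 := by
  have := ν.v_mul 1 1 one_ne_zero one_ne_zero
  rw [mul_one] at this; omega

lemma Vv_one : ν.Vv 1 = ((0:ℤ) : WithTop ℤ) := by
  rw [Vv_of_ne one_ne_zero, v_one]

lemma v_neg_one : ν.v (-1 : E) = 0 := by
  have := ν.v_mul (-1) (-1) (by norm_num) (by norm_num)
  rw [show ((-1 : E) * (-1) = 1) by ring, v_one] at this; omega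

lemma v_neg {x : E} (hx : x ≠ 0) : ν.v (-x) = ν.v x := by
  have := ν.v_mul (-1) x (by norm_num) hx
  rw [show ((-1 : E) * x = -x) by ring, v_neg_one] at this; omega

lemma Vv_neg (x : E) : ν.Vv (-x) = ν.Vv x := by
  rcases eq_or_ne x 0 with rfl | hx
  · simp
  · rw [Vv_of_ne (neg_ne_zero.2 hx), Vv_of_ne hx, v_neg hx]

lemma Vv_mul (x y : E) : ν.Vv (x * y) = ν.Vv x + ν.Vv y := by
  rcases eq_or_ne x 0 with rfl | hx
  · simp [Vv]
  rcases eq_or_ne y 0 with rfl | hy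
  · simp [Vv]
  rw [Vv_of_ne hx, Vv_of_ne hy, Vv_of_ne (mul_ne_zero hx hy), ν.v_mul x y hx hy]
  push_cast; ring

lemma Vv_add (x y : E) : min (ν.Vv x) (ν.Vv y) ≤ ν.Vv (x + y) := by
  rcases eq_or_ne x 0 with rfl | hx
  · simp [min_le_right]
  rcases eq_or_ne y 0 with rfl | hy
  · simp [min_le_left]
  rcases eq_or_ne (x + y) 0 with h0 | h0
  · rw [h0, Vv_zero]; exact le_top
  rw [Vv_of_ne hx, Vv_of_ne hy, Vv_of_ne h0]
  have := ν.v_min_le_add x y hx hy h0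
  rw [← WithTop.coe_min, WithTop.coe_le_coe]
  exact this

lemma Vv_add_eq_left {x y : E} (h : ν.Vv x < ν.Vv y) : ν.Vv (x + y) = ν.Vv x := by
  have hx : x ≠ 0 := ne_zero_of_Vv_ne_top h.ne_top
  apply le_antisymm
  · by_contra hc
    push_neg at hc
    have h2 : min (ν.Vv (x+y)) (ν.Vv (-y)) ≤ ν.Vv x := by
      calc min (ν.Vv (x+y)) (ν.Vv (-y)) ≤ ν.Vv ((x+y) + (-y)) := Vv_add _ _
        _ = ν.Vv x := by rw [show (x+y) + (-y) = x by ring]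
    rw [Vv_neg] at h2
    exact absurd h2 (not_le.2 (lt_min hc h))
  · calc ν.Vv x = min (ν.Vv x) (ν.Vv y) := (min_eq_left h.le).symm
      _ ≤ ν.Vv (x + y) := Vv_add x y

lemma Vv_add_eq_right {x y : E} (h : ν.Vv y < ν.Vv x) : ν.Vv (x + y) = ν.Vv y := by
  rw [add_comm]; exact Vv_add_eq_left h

lemma v_inv {x : E} (hx : x ≠ 0) : ν.v x⁻¹ = - ν.v x := by
  have := ν.v_mul x x⁻¹ hx (inv_ne_zero hx)
  rw [mul_inv_cancel₀ hx, v_one] at this; omega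

lemma v_pow {π : E} (hπ : π ≠ 0) : ∀ n : ℕ, ν.v (π ^ n) = n * ν.v π := by
  intro n
  induction n with
  | zero => simpa using v_one
  | succ n ih =>
    rw [pow_succ, ν.v_mul _ _ (pow_ne_zero _ hπ) hπ, ih]; push_cast; ring

lemma v_zpow {π : E} (hπ : π ≠ 0) : ∀ m : ℤ, ν.v (π ^ m) = m * ν.v π := by
  intro m
  cases m with
  | ofNat n => rw [Int.ofNat_eq_coe, zpow_natCast, v_pow hπ n]
  | negSucc n =>
    rw [zpow_negSucc, v_inv (pow_ne_zero _ hπ), v_pow hπ (n+1)]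
    push_cast [Int.negSucc_eq]; ring

lemma Vv_zpow {π : E} (hπ : ν.IsUniformizer π) (m : ℤ) :
    ν.Vv (π ^ m) = (m : WithTop ℤ) := by
  rw [Vv_of_ne (zpow_ne_zero _ hπ.1), v_zpow hπ.1, hπ.2, mul_one]

lemma mem_O_iff {x : E} : x ∈ ν.O ↔ ((0:ℤ) : WithTop ℤ) ≤ ν.Vv x := by
  rcases eq_or_ne x 0 with rfl | hx
  · simp only [Vv_zero, le_top, iff_true]; exact Or.inl rfl
  constructor
  · rintro (rfl | h)
    · exact absurd rfl hx
    · rw [Vv_of_ne hx, WithTop.coe_le_coe]; exact h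
  · intro h
    rcases eq_or_ne x 0 with rfl | hx
    · exact Or.inl rfl
    · right; rw [Vv_of_ne hx, WithTop.coe_le_coe] at h; exact h

lemma mem_ball_iff {π : E} (hπ : ν.IsUniformizer π) {m : ℤ} {x : E} :
    x ∈ ν.ball π m ↔ ((m:ℤ) : WithTop ℤ) ≤ ν.Vv x := by
  constructor
  · rintro ⟨z, hz, rfl⟩
    rw [Vv_mul, Vv_zpow hπ]
    calc ((m:ℤ) : WithTop ℤ) = (m : WithTop ℤ) + ((0:ℤ):WithTop ℤ) := by
          rw [← WithTop.coe_add]; norm_num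
      _ ≤ (m : WithTop ℤ) + ν.Vv z := add_le_add le_rfl (mem_O_iff.1 hz)
  · intro h
    refine ⟨π ^ (-m) * x, ?_, ?_⟩
    · rw [mem_O_iff, Vv_mul, Vv_zpow hπ]
      rcases eq_or_ne x 0 with rfl | hx
      · rw [Vv_zero]; simp
      · rw [Vv_of_ne hx]
        rw [Vv_of_ne hx, WithTop.coe_le_coe] at h
        rw [← WithTop.coe_add, WithTop.coe_le_coe]; omega
    · rw [← mul_assoc, ← zpow_add₀ hπ.1]
      simp

end DiscreteVal

section Aux2

local notation "SL2" => Matrix.SpecialLinearGroup (Fin 2) E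

variable (ν : DiscreteVal E) (π : E)

lemma detEq (g : SL2) : g.1 0 0 * g.1 1 1 - g.1 0 1 * g.1 1 0 = 1 := by
  have h := g.2
  rw [Matrix.det_fin_two] at h
  exact h

lemma mul_entry (g h : SL2) (i j : Fin 2) :
    (g * h).1 i j = g.1 i 0 * h.1 0 j + g.1 i 1 * h.1 1 j := by
  rw [Matrix.SpecialLinearGroup.coe_mul, Matrix.mul_apply, Fin.sum_univ_two]

lemma inv_entries (g : SL2) :
    (g⁻¹).1 0 0 = g.1 1 1 ∧ (g⁻¹).1 0 1 = -g.1 0 1 ∧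
      (g⁻¹).1 1 0 = -g.1 1 0 ∧ (g⁻¹).1 1 1 = g.1 0 0 := by
  rw [Matrix.SpecialLinearGroup.coe_inv, Matrix.adjugate_fin_two]
  refine ⟨rfl, rfl, rfl, rfl⟩

variable {ν π}

lemma mem_slIntegral_iff {g : SL2} :
    g ∈ slIntegral ν ↔ ∀ i j, ((0:ℤ) : WithTop ℤ) ≤ ν.Vv (g.1 i j) := by
  constructor
  · intro h i j; exact DiscreteVal.mem_O_iff.1 (h i j)
  · intro h i j; exact DiscreteVal.mem_O_iff.2 (h i j)

lemma mem_slConj_iff (hπ : ν.IsUniformizer π) {g : SL2} :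
    g ∈ slConj ν π ↔ ((0:ℤ) : WithTop ℤ) ≤ ν.Vv (g.1 0 0) ∧
      ((0:ℤ) : WithTop ℤ) ≤ ν.Vv (g.1 1 1) ∧
      ((-1:ℤ) : WithTop ℤ) ≤ ν.Vv (g.1 0 1) ∧
      ((1:ℤ) : WithTop ℤ) ≤ ν.Vv (g.1 1 0) := by
  unfold slConj
  rw [Set.mem_setOf_eq, DiscreteVal.mem_O_iff, DiscreteVal.mem_O_iff,
    DiscreteVal.mem_ball_iff hπ, DiscreteVal.mem_ball_iff hπ]

lemma add_le_Vv {a b : WithTop ℤ} {x y : E} (hx : a ≤ ν.Vv x) (hy : b ≤ ν.Vv y) :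
    a + b ≤ ν.Vv (x * y) := by
  rw [DiscreteVal.Vv_mul]; exact add_le_add hx hy

lemma wt_coe_add (a b : ℤ) :
    ((a:ℤ) : WithTop ℤ) + ((b:ℤ) : WithTop ℤ) = ((a + b : ℤ) : WithTop ℤ) := by
  rw [← WithTop.coe_add]

lemma slIntegral_one : (1 : SL2) ∈ slIntegral ν := by
  rw [mem_slIntegral_iff]
  intro i j
  fin_cases i <;> fin_cases j <;>
    simp [DiscreteVal.Vv_one, DiscreteVal.Vv_zero, Matrix.SpecialLinearGroup.coe_one,
      Matrix.one_apply]

lemma slIntegral_mul {g h : SL2} (hg : g ∈ slIntegral ν) (hh : h ∈ slIntegral ν) :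
    g * h ∈ slIntegral ν := by
  rw [mem_slIntegral_iff] at hg hh ⊢
  intro i j
  rw [mul_entry]
  calc ((0:ℤ) : WithTop ℤ) = min (((0:ℤ):WithTop ℤ) + ((0:ℤ):WithTop ℤ))
        (((0:ℤ):WithTop ℤ) + ((0:ℤ):WithTop ℤ)) := by rw [wt_coe_add]; norm_num
    _ ≤ min (ν.Vv (g.1 i 0 * h.1 0 j)) (ν.Vv (g.1 i 1 * h.1 1 j)) :=
        min_le_min (add_le_Vv (hg i 0) (hh 0 j)) (add_le_Vv (hg i 1) (hh 1 j))
    _ ≤ _ := DiscreteVal.Vv_add _ _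

lemma slIntegral_inv {g : SL2} (hg : g ∈ slIntegral ν) : g⁻¹ ∈ slIntegral ν := by
  rw [mem_slIntegral_iff] at hg ⊢
  obtain ⟨h1, h2, h3, h4⟩ := inv_entries g
  intro i j
  fin_cases i <;> fin_cases j <;>
    simp only [Fin.zero_eta, Fin.mk_one, h1, h2, h3, h4, DiscreteVal.Vv_neg]
  · exact hg 1 1
  · exact hg 0 1
  · exact hg 1 0
  · exact hg 0 0

lemma slConj_one (hπ : ν.IsUniformizer π) : (1 : SL2) ∈ slConj ν π := by
  rw [mem_slConj_iff hπ]
  simp only [Matrix.SpecialLinearGroup.coe_one, Matrix.one_apply]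
  norm_num [DiscreteVal.Vv_one, DiscreteVal.Vv_zero]

lemma slConj_mul (hπ : ν.IsUniformizer π) {g h : SL2}
    (hg : g ∈ slConj ν π) (hh : h ∈ slConj ν π) : g * h ∈ slConj ν π := by
  rw [mem_slConj_iff hπ] at hg hh ⊢
  obtain ⟨g1, g2, g3, g4⟩ := hg
  obtain ⟨h1, h2, h3, h4⟩ := hh
  have key : ∀ (a b : ℤ) (x y : E), (((a:ℤ):WithTop ℤ) ≤ ν.Vv x) →
      (((b:ℤ):WithTop ℤ) ≤ ν.Vv y) → ∀ (c : ℤ), c ≤ a + b →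
      ((c:ℤ) : WithTop ℤ) ≤ ν.Vv (x * y) := by
    intro a b x y hx hy c hc
    calc ((c:ℤ) : WithTop ℤ) ≤ ((a + b : ℤ) : WithTop ℤ) := WithTop.coe_le_coe.2 hc
      _ = ((a:ℤ) : WithTop ℤ) + ((b:ℤ) : WithTop ℤ) := (wt_coe_add a b).symm
      _ ≤ ν.Vv (x * y) := add_le_Vv hx hy
  refine ⟨?_, ?_, ?_, ?_⟩ <;> rw [mul_entry]
  · exact le_trans
      (le_min (key 0 0 _ _ g1 h1 0 (by norm_num)) (key (-1) 1 _ _ g3 h4 0 (by norm_num)))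
      (DiscreteVal.Vv_add _ _)
  · exact le_trans
      (le_min (key 1 (-1) _ _ g4 h3 0 (by norm_num)) (key 0 0 _ _ g2 h2 0 (by norm_num)))
      (DiscreteVal.Vv_add _ _)
  · exact le_trans
      (le_min (key 0 (-1) _ _ g1 h3 (-1) (by norm_num)) (key (-1) 0 _ _ g3 h2 (-1) (by norm_num)))
      (DiscreteVal.Vv_add _ _)
  · exact le_trans
      (le_min (key 1 0 _ _ g4 h1 1 (by norm_num)) (key 0 1 _ _ g2 h4 1 (by norm_num)))
      (DiscreteVal.Vv_add _ _)

lemma slConj_inv (hπ : ν.IsUniformizer π) {g : SL2} (hg : g ∈ slConj ν π) :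
    g⁻¹ ∈ slConj ν π := by
  rw [mem_slConj_iff hπ] at hg ⊢
  obtain ⟨g1, g2, g3, g4⟩ := hg
  obtain ⟨h1, h2, h3, h4⟩ := inv_entries g
  rw [h1, h2, h3, h4, DiscreteVal.Vv_neg, DiscreteVal.Vv_neg]
  exact ⟨g2, g1, g3, g4⟩

end Aux2

section Aux3

local notation "SL2" => Matrix.SpecialLinearGroup (Fin 2) E

variable (ν : DiscreteVal E) (π : E)

/-- Left action of `SL₂` on column vectors. -/
def actc (g : SL2) (x : E × E) : E × E :=
  (g.1 0 0 * x.1 + g.1 0 1 * x.2, g.1 1 0 * x.1 + g.1 1 1 * x.2)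

lemma actc_one (x : E × E) : actc 1 x = x := by
  simp [actc, Matrix.SpecialLinearGroup.coe_one, Matrix.one_apply]

lemma actc_mul (g h : SL2) (x : E × E) : actc (g * h) x = actc g (actc h x) := by
  unfold actc
  simp only [mul_entry, Prod.mk.injEq]
  constructor <;> ring

/-- The "`∞`-disc" : `v a < v b`. -/
def inBx (x : E × E) : Prop := ν.Vv x.1 < ν.Vv x.2

/-- The complement region: `v b ≤ v a` and `b ≠ 0`. -/
def inAx (x : E × E) : Prop := ν.Vv x.2 ≤ ν.Vv x.1 ∧ x.2 ≠ 0

variable {ν π}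

lemma not_inA_and_inB {x : E × E} (h1 : inAx ν x) (h2 : inBx ν x) : False :=
  absurd h2 (not_lt.2 h1.1)

/-- A non-Iwahori element of `U` has a unit lower-left entry. -/
lemma U_nonIwahori (hπ : ν.IsUniformizer π) {u : SL2}
    (hu : u ∈ slIntegral ν) (hni : u ∉ slIntegral ν ∩ slConj ν π) :
    ν.Vv (u.1 1 0) = ((0:ℤ) : WithTop ℤ) := by
  have hints := mem_slIntegral_iff.1 hu
  have h10 := hints 1 0
  by_contra hc
  apply hni
  refine ⟨hu, (mem_slConj_iff hπ).2 ⟨hints 0 0, hints 1 1,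
    le_trans (WithTop.coe_le_coe.2 (by norm_num)) (hints 0 1), ?_⟩⟩
  rcases eq_or_ne (ν.Vv (u.1 1 0)) ⊤ with ht | ht
  · rw [ht]; exact le_top
  · obtain ⟨k, hk⟩ := WithTop.ne_top_iff_exists.1 ht
    rw [← hk] at h10 ⊢
    rw [WithTop.coe_le_coe] at h10 ⊢
    have : k ≠ 0 := fun h => hc (by rw [← hk, h])
    omega

/-- A non-Iwahori element of `U'` has upper-right entry of valuation exactly `-1`. -/
lemma U'_nonIwahori (hπ : ν.IsUniformizer π) {u : SL2}
    (hu : u ∈ slConj ν π) (hni : u ∉ slIntegral ν ∩ slConj ν π) :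
    ν.Vv (u.1 0 1) = ((-1:ℤ) : WithTop ℤ) := by
  obtain ⟨h00, h11, h01, h10⟩ := (mem_slConj_iff hπ).1 hu
  by_contra hc
  apply hni
  refine ⟨mem_slIntegral_iff.2 ?_, hu⟩
  have h01' : ((0:ℤ) : WithTop ℤ) ≤ ν.Vv (u.1 0 1) := by
    rcases eq_or_ne (ν.Vv (u.1 0 1)) ⊤ with ht | ht
    · rw [ht]; exact le_top
    · obtain ⟨k, hk⟩ := WithTop.ne_top_iff_exists.1 ht
      rw [← hk] at h01 ⊢
      rw [WithTop.coe_le_coe] at h01 ⊢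
      have : k ≠ -1 := fun h => hc (by rw [← hk, h])
      omega
  intro i j
  fin_cases i <;> fin_cases j
  · exact h00
  · exact h01'
  · exact le_trans (by norm_num) h10
  · exact h11

lemma stepU (hπ : ν.IsUniformizer π) {u : SL2} (hu : u ∈ slIntegral ν)
    (hni : u ∉ slIntegral ν ∩ slConj ν π) {x : E × E} {n : ℤ}
    (hx : inBx ν x) (hn : ν.Vv x.1 = ((n:ℤ) : WithTop ℤ)) :
    inAx ν (actc u x) ∧ ν.Vv (actc u x).2 = ((n:ℤ) : WithTop ℤ) := by
  have h10 := U_nonIwahori hπ hu hni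
  have hints := mem_slIntegral_iff.1 hu
  have hb' : ν.Vv (u.1 1 0 * x.1 + u.1 1 1 * x.2) = ((n:ℤ) : WithTop ℤ) := by
    rw [DiscreteVal.Vv_add_eq_left, DiscreteVal.Vv_mul, h10, hn, wt_coe_add]
    · norm_num
    · rw [DiscreteVal.Vv_mul, h10, hn, wt_coe_add]
      calc ((0 + n:ℤ) : WithTop ℤ) = ((0:ℤ):WithTop ℤ) + ν.Vv x.1 := by
            rw [hn, wt_coe_add]
        _ < ν.Vv (u.1 1 1) + ν.Vv x.2 := by
            refine lt_of_lt_of_le (WithTop.add_lt_add_left (WithTop.coe_ne_top) ?_)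
              (add_le_add (hints 1 1) le_rfl)
            exact hx
        _ = ν.Vv (u.1 1 1 * x.2) := (DiscreteVal.Vv_mul _ _).symm
  refine ⟨⟨?_, ?_⟩, hb'⟩
  · show ν.Vv (actc u x).2 ≤ ν.Vv (actc u x).1
    rw [show (actc u x).2 = u.1 1 0 * x.1 + u.1 1 1 * x.2 from rfl, hb']
    show ((n:ℤ) : WithTop ℤ) ≤ ν.Vv (u.1 0 0 * x.1 + u.1 0 1 * x.2)
    refine le_trans (le_min ?_ ?_) (DiscreteVal.Vv_add _ _)
    · calc ((n:ℤ) : WithTop ℤ) = ((0:ℤ):WithTop ℤ) + ν.Vv x.1 := by rw [hn, wt_coe_add]; norm_num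
        _ ≤ ν.Vv (u.1 0 0) + ν.Vv x.1 := add_le_add (hints 0 0) le_rfl
        _ = ν.Vv (u.1 0 0 * x.1) := (DiscreteVal.Vv_mul _ _).symm
    · calc ((n:ℤ) : WithTop ℤ) ≤ ν.Vv x.2 := by rw [← hn]; exact hx.le
        _ = ((0:ℤ):WithTop ℤ) + ν.Vv x.2 := by
            rcases eq_or_ne (ν.Vv x.2) ⊤ with ht | ht
            · rw [ht]; rfl
            · obtain ⟨k, hk⟩ := WithTop.ne_top_iff_exists.1 ht
              rw [← hk, wt_coe_add]; norm_num
        _ ≤ ν.Vv (u.1 0 1) + ν.Vv x.2 := add_le_add (hints 0 1) le_rfl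
        _ = ν.Vv (u.1 0 1 * x.2) := (DiscreteVal.Vv_mul _ _).symm
  · show (actc u x).2 ≠ 0
    intro hzero
    have h2 : ν.Vv (u.1 1 0 * x.1 + u.1 1 1 * x.2) = ⊤ := by
      rw [show u.1 1 0 * x.1 + u.1 1 1 * x.2 = (actc u x).2 from rfl, hzero]
      exact ν.Vv_zero
    rw [hb'] at h2
    exact WithTop.coe_ne_top h2

lemma stepU' (hπ : ν.IsUniformizer π) {u : SL2} (hu : u ∈ slConj ν π)
    (hni : u ∉ slIntegral ν ∩ slConj ν π) {x : E × E} {n : ℤ}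
    (hx : inAx ν x) (hn : ν.Vv x.2 = ((n:ℤ) : WithTop ℤ)) :
    inBx ν (actc u x) ∧ ν.Vv (actc u x).1 = ((n - 1:ℤ) : WithTop ℤ) := by
  have h01 := U'_nonIwahori hπ hu hni
  obtain ⟨h00, h11, _, h10⟩ := (mem_slConj_iff hπ).1 hu
  have ha' : ν.Vv (u.1 0 0 * x.1 + u.1 0 1 * x.2) = ((n - 1:ℤ) : WithTop ℤ) := by
    rw [DiscreteVal.Vv_add_eq_right]
    · rw [DiscreteVal.Vv_mul, h01, hn, wt_coe_add]
      exact congrArg (fun k : ℤ => ((k:ℤ) : WithTop ℤ)) (by ring)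
    · rw [DiscreteVal.Vv_mul, DiscreteVal.Vv_mul, h01, hn, wt_coe_add]
      calc ((-1 + n:ℤ) : WithTop ℤ) < ((0 + n:ℤ) : WithTop ℤ) := by
            rw [WithTop.coe_lt_coe]; omega
        _ ≤ ν.Vv (u.1 0 0) + ν.Vv x.1 := by
            rw [← wt_coe_add]
            exact add_le_add h00 (by rw [← hn]; exact hx.1)
  refine ⟨?_, ha'⟩
  show ν.Vv (actc u x).1 < ν.Vv (actc u x).2
  rw [show (actc u x).1 = u.1 0 0 * x.1 + u.1 0 1 * x.2 from rfl, ha']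
  show ((n-1:ℤ) : WithTop ℤ) < ν.Vv (u.1 1 0 * x.1 + u.1 1 1 * x.2)
  refine lt_of_lt_of_le (lt_min ?_ ?_) (DiscreteVal.Vv_add _ _)
  · calc ((n-1:ℤ) : WithTop ℤ) < ((1 + n:ℤ) : WithTop ℤ) := by rw [WithTop.coe_lt_coe]; omega
      _ = ((1:ℤ):WithTop ℤ) + ((n:ℤ):WithTop ℤ) := (wt_coe_add _ _).symm
      _ ≤ ν.Vv (u.1 1 0) + ν.Vv x.1 := add_le_add h10 (by rw [← hn]; exact hx.1)
      _ = ν.Vv (u.1 1 0 * x.1) := (DiscreteVal.Vv_mul _ _).symm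
  · calc ((n-1:ℤ) : WithTop ℤ) < ((0 + n:ℤ) : WithTop ℤ) := by rw [WithTop.coe_lt_coe]; omega
      _ = ((0:ℤ):WithTop ℤ) + ((n:ℤ):WithTop ℤ) := (wt_coe_add _ _).symm
      _ ≤ ν.Vv (u.1 1 1) + ν.Vv x.2 := add_le_add h11 (by rw [hn])
      _ = ν.Vv (u.1 1 1 * x.2) := (DiscreteVal.Vv_mul _ _).symm

end Aux3

section Aux4

local notation "SL2" => Matrix.SpecialLinearGroup (Fin 2) E

variable {ν : DiscreteVal E} {π : E}

lemma cosetRel_equivalence {H : Set SL2} (h1 : (1:SL2) ∈ H)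
    (hinv : ∀ {a : SL2}, a ∈ H → a⁻¹ ∈ H)
    (hmul : ∀ {a b : SL2}, a ∈ H → b ∈ H → a * b ∈ H) :
    Equivalence (cosetRel H) := by
  constructor
  · intro g; exact ⟨1, h1, (one_mul g).symm⟩
  · rintro g g' ⟨h, hh, rfl⟩
    exact ⟨h⁻¹, hinv hh, by rw [← mul_assoc, inv_mul_cancel, one_mul]⟩
  · rintro g g' g'' ⟨h, hh, rfl⟩ ⟨k, hk, rfl⟩
    exact ⟨k * h, hmul hk hh, (mul_assoc k h g).symm⟩

lemma cosetMk_eq_iff {H : Set SL2} (hE : Equivalence (cosetRel H)) {g g' : SL2} :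
    cosetMk H g = cosetMk H g' ↔ ∃ h ∈ H, g' = h * g := by
  unfold cosetMk
  refine (Quot.eq (r := cosetRel H)).trans ?_
  exact ⟨fun h => (Equivalence.eqvGen_iff hE).1 h, fun h => (Equivalence.eqvGen_iff hE).2 h⟩

lemma equivU : Equivalence (cosetRel (slIntegral ν)) :=
  cosetRel_equivalence slIntegral_one (fun h => slIntegral_inv h)
    (fun h h' => slIntegral_mul h h')

lemma equivU' (hπ : ν.IsUniformizer π) : Equivalence (cosetRel (slConj ν π)) :=
  cosetRel_equivalence (slConj_one hπ) (fun h => slConj_inv hπ h)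
    (fun h h' => slConj_mul hπ h h')

lemma projToU_mk (g : SL2) :
    projToU ν π (cosetMk (slIntegral ν ∩ slConj ν π) g) = cosetMk (slIntegral ν) g := rfl

lemma projToU'_mk (g : SL2) :
    projToU' ν π (cosetMk (slIntegral ν ∩ slConj ν π) g) = cosetMk (slConj ν π) g := rfl

lemma exists_ne_same_image {α β M : Type} [AddCommGroup M] (p : α → β) (f : α →₀ M)
    (h : Finsupp.mapDomain p f = 0) {s : α} (hs : s ∈ f.support) :
    ∃ s', s' ∈ f.support ∧ s' ≠ s ∧ p s' = p s := by
  classical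
  by_contra hc
  push_neg at hc
  have key : (Finsupp.mapDomain p f) (p s) = f s := by
    rw [Finsupp.mapDomain, Finsupp.sum_apply, Finsupp.sum, Finset.sum_eq_single s]
    · simp [Finsupp.single_apply]
    · intro a ha hne
      rw [Finsupp.single_apply, if_neg (hc a ha hne)]
    · intro hns; exact absurd hs hns
  rw [h] at key
  exact (Finsupp.mem_support_iff.1 hs) key.symm

/-- Exactness on the left: the kernel of `δ` is trivial. -/
lemma delta_ker (hπ : ν.IsUniformizer π) {Λ : Type} [CommRing Λ]
    (f : CosetSpace (slIntegral ν ∩ slConj ν π) →₀ Λ)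
    (h1 : Finsupp.mapDomain (projToU ν π) f = 0)
    (h2 : Finsupp.mapDomain (projToU' ν π) f = 0) : f = 0 := by
  classical
  by_contra hf
  obtain ⟨s0, hs0⟩ := Finsupp.support_nonempty_iff.2 hf
  -- representatives
  have equivΓ : Equivalence (cosetRel (slIntegral ν ∩ slConj ν π)) :=
    cosetRel_equivalence (Set.mem_inter slIntegral_one (slConj_one hπ))
      (fun ha => Set.mem_inter (slIntegral_inv ha.1) (slConj_inv hπ ha.2))
      (fun ha hb => Set.mem_inter (slIntegral_mul ha.1 hb.1) (slConj_mul hπ ha.2 hb.2))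
  have hrep : ∀ s : CosetSpace (slIntegral ν ∩ slConj ν π),
      ∃ g : SL2, cosetMk (slIntegral ν ∩ slConj ν π) g = s := fun s => Quot.exists_rep s
  choose rep hrepspec using hrep
  -- the step function
  have step : ∀ n : ℕ, ∀ s : CosetSpace (slIntegral ν ∩ slConj ν π), s ∈ f.support →
      ∃ s', s' ∈ f.support ∧ s' ≠ s ∧
        (if n % 2 = 0 then projToU ν π s' = projToU ν π s
          else projToU' ν π s' = projToU' ν π s) := by
    intro n s hs
    by_cases hn : n % 2 = 0
    · obtain ⟨s', h1', h2', h3'⟩ := exists_ne_same_image (projToU ν π) f h1 hs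
      exact ⟨s', h1', h2', by rw [if_pos hn]; exact h3'⟩
    · obtain ⟨s', h1', h2', h3'⟩ := exists_ne_same_image (projToU' ν π) f h2 hs
      exact ⟨s', h1', h2', by rw [if_neg hn]; exact h3'⟩
  choose nxt hnxt1 hnxt2 hnxt3 using step
  -- the walk
  let seq : ℕ → {s : CosetSpace (slIntegral ν ∩ slConj ν π) // s ∈ f.support} := fun n =>
    Nat.rec ⟨s0, hs0⟩ (fun n p => ⟨nxt n p.1 p.2, hnxt1 n p.1 p.2⟩) n
  have seq_succ : ∀ n, (seq (n+1)).1 = nxt n (seq n).1 (seq n).2 := fun n => rfl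
  -- letters
  have letter : ∀ n, ∃ u : SL2, rep (seq (n+1)).1 = u * rep (seq n).1 ∧
      u ∉ slIntegral ν ∩ slConj ν π ∧
      (if n % 2 = 0 then u ∈ slIntegral ν else u ∈ slConj ν π) := by
    intro n
    have hne : (seq (n+1)).1 ≠ (seq n).1 := by
      rw [seq_succ]; exact hnxt2 n (seq n).1 (seq n).2
    have hproj := hnxt3 n (seq n).1 (seq n).2
    rw [← seq_succ n] at hproj
    by_cases hn : n % 2 = 0
    · rw [if_pos hn] at hproj
      rw [← hrepspec (seq (n+1)).1, ← hrepspec (seq n).1, projToU_mk, projToU_mk] at hproj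
      obtain ⟨u, hu, hueq⟩ := (cosetMk_eq_iff equivU).1 hproj.symm
      refine ⟨u, hueq, ?_, by rw [if_pos hn]; exact hu⟩
      intro huΓ
      apply hne
      rw [← hrepspec (seq (n+1)).1, ← hrepspec (seq n).1]
      exact ((cosetMk_eq_iff equivΓ).2 ⟨u, huΓ, hueq⟩).symm
    · rw [if_neg hn] at hproj
      rw [← hrepspec (seq (n+1)).1, ← hrepspec (seq n).1, projToU'_mk, projToU'_mk] at hproj
      obtain ⟨u, hu, hueq⟩ := (cosetMk_eq_iff (equivU' hπ)).1 hproj.symm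
      refine ⟨u, hueq, ?_, by rw [if_neg hn]; exact hu⟩
      intro huΓ
      apply hne
      rw [← hrepspec (seq (n+1)).1, ← hrepspec (seq n).1]
      exact ((cosetMk_eq_iff equivΓ).2 ⟨u, huΓ, hueq⟩).symm
  choose u hu1 hu2 hu3 using letter
  -- tracked vector
  let X : ℕ → E × E := fun n => actc (rep (seq n).1 * (rep (seq 0).1)⁻¹) ((1:E), (0:E))
  have hX0 : X 0 = ((1:E), (0:E)) := by
    show actc (rep (seq 0).1 * (rep (seq 0).1)⁻¹) ((1:E), (0:E)) = _
    rw [mul_inv_cancel, actc_one]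
  have hXsucc : ∀ n, X (n+1) = actc (u n) (X n) := by
    intro n
    show actc (rep (seq (n+1)).1 * (rep (seq 0).1)⁻¹) _ = _
    rw [hu1 n, mul_assoc, actc_mul]
  -- the invariant
  have inv : ∀ n, if n % 2 = 0
      then inBx ν (X n) ∧ ν.Vv (X n).1 = ((-(n/2 : ℕ) : ℤ) : WithTop ℤ)
      else inAx ν (X n) ∧ ν.Vv (X n).2 = ((-(n/2 : ℕ) : ℤ) : WithTop ℤ) := by
    intro n
    induction n with
    | zero =>
      rw [if_pos rfl, hX0]
      constructor
      · show ν.Vv 1 < ν.Vv 0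
        rw [DiscreteVal.Vv_one, ν.Vv_zero]
        exact WithTop.coe_lt_top 0
      · show ν.Vv 1 = _
        rw [DiscreteVal.Vv_one]
        norm_num
    | succ n ih =>
      by_cases hn : n % 2 = 0
      · rw [if_pos hn] at ih
        have hu3' := hu3 n; rw [if_pos hn] at hu3'
        obtain ⟨hA, hval⟩ := stepU hπ hu3' (hu2 n) ih.1 ih.2
        rw [← hXsucc n] at hA hval
        have hodd : ¬((n+1) % 2 = 0) := by omega
        rw [if_neg hodd]
        refine ⟨hA, ?_⟩
        rw [hval]
        congr 1
        omega
      · rw [if_neg hn] at ih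
        have hu3' := hu3 n; rw [if_neg hn] at hu3'
        obtain ⟨hB, hval⟩ := stepU' hπ hu3' (hu2 n) ih.1 ih.2
        rw [← hXsucc n] at hB hval
        have heven : (n+1) % 2 = 0 := by omega
        rw [if_pos heven]
        refine ⟨hB, ?_⟩
        rw [hval]
        congr 1
        omega
  -- pigeonhole
  obtain ⟨a, b, hab, heq⟩ := Finite.exists_ne_map_eq_of_infinite seq
  wlog hlt : a < b generalizing a b
  · exact this b a hab.symm heq.symm (by omega)
  have hXeq : X a = X b :=
    congrArg (fun p : {s : CosetSpace (slIntegral ν ∩ slConj ν π) // s ∈ f.support} =>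
      actc (rep p.1 * (rep (seq 0).1)⁻¹) ((1:E), (0:E))) heq
  have hb2 : a + 2 ≤ b := by
    rcases Nat.lt_or_ge (a+1) b with h | h
    · omega
    · exfalso
      have : b = a + 1 := by omega
      subst this
      have := hnxt2 a (seq a).1 (seq a).2
      rw [← seq_succ a] at this
      exact this (congrArg Subtype.val heq).symm
  have inva := inv a
  have invb := inv b
  by_cases hpar : a % 2 = b % 2
  · by_cases ha : a % 2 = 0
    · rw [if_pos ha] at inva
      rw [if_pos (by omega)] at invb
      have : ((-(a/2 : ℕ) : ℤ) : WithTop ℤ) = ((-(b/2 : ℕ) : ℤ) : WithTop ℤ) := by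
        rw [← inva.2, ← invb.2, hXeq]
      rw [WithTop.coe_eq_coe] at this
      omega
    · rw [if_neg ha] at inva
      rw [if_neg (by omega)] at invb
      have : ((-(a/2 : ℕ) : ℤ) : WithTop ℤ) = ((-(b/2 : ℕ) : ℤ) : WithTop ℤ) := by
        rw [← inva.2, ← invb.2, hXeq]
      rw [WithTop.coe_eq_coe] at this
      omega
  · by_cases ha : a % 2 = 0
    · rw [if_pos ha] at inva
      rw [if_neg (by omega)] at invb
      rw [hXeq] at inva
      exact not_inA_and_inB invb.1 inva.1
    · rw [if_neg ha] at inva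
      rw [if_pos (by omega)] at invb
      rw [← hXeq] at invb
      exact not_inA_and_inB inva.1 invb.1

end Aux4

section Aux5

local notation "SL2" => Matrix.SpecialLinearGroup (Fin 2) E

variable (ν : DiscreteVal E) (π : E)

/-- Elementary matrix `[[1,x],[0,1]]`. -/
def El12 (x : E) : SL2 := ⟨!![1, x; 0, 1], by simp [Matrix.det_fin_two_of]⟩

/-- Elementary matrix `[[1,0],[x,1]]`. -/
def El21 (x : E) : SL2 := ⟨!![1, 0; x, 1], by simp [Matrix.det_fin_two_of]⟩

/-- `w = [[0,1],[-1,0]]`. -/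
def Wmat : SL2 := ⟨!![0, 1; -1, 0], by simp [Matrix.det_fin_two_of]⟩

def Wminv : SL2 := ⟨!![0, -1; 1, 0], by simp [Matrix.det_fin_two_of]⟩

def Wcmat (hπ : π ≠ 0) : SL2 := ⟨!![0, π⁻¹; -π, 0], by
  simp [Matrix.det_fin_two_of]
  field_simp⟩

def Wcinv (hπ : π ≠ 0) : SL2 := ⟨!![0, -π⁻¹; π, 0], by
  simp [Matrix.det_fin_two_of]
  field_simp⟩

variable {ν π}

lemma Wmat_inv : (Wmat : SL2)⁻¹ = Wminv := by
  rw [eq_comm, eq_inv_iff_mul_eq_one]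
  apply Subtype.ext
  rw [Matrix.SpecialLinearGroup.coe_mul]
  show (!![0, -1; 1, 0] : Matrix (Fin 2) (Fin 2) E) * !![0, 1; -1, 0] = _
  rw [show ((1 : SL2) : Matrix (Fin 2) (Fin 2) E) = 1 from rfl]
  ext i j
  fin_cases i <;> fin_cases j <;> simp [Matrix.mul_apply, Fin.sum_univ_two, Matrix.one_apply]

lemma Wcmat_inv (hπ : π ≠ 0) : (Wcmat π hπ)⁻¹ = Wcinv π hπ := by
  rw [eq_comm, eq_inv_iff_mul_eq_one]
  apply Subtype.ext
  rw [Matrix.SpecialLinearGroup.coe_mul]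
  show (!![0, -π⁻¹; π, 0] : Matrix (Fin 2) (Fin 2) E) * !![0, π⁻¹; -π, 0] = _
  rw [show ((1 : SL2) : Matrix (Fin 2) (Fin 2) E) = 1 from rfl]
  ext i j
  fin_cases i <;> fin_cases j <;>
    simp [Matrix.mul_apply, Fin.sum_univ_two, Matrix.one_apply] <;> field_simp

lemma El12_mem_U {x : E} (hx : ((0:ℤ) : WithTop ℤ) ≤ ν.Vv x) : El12 x ∈ slIntegral ν := by
  rw [mem_slIntegral_iff]
  rw [Fin.forall_fin_two]
  constructor <;> rw [Fin.forall_fin_two] <;> constructor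
  · rw [show (El12 x).1 0 0 = 1 from rfl, DiscreteVal.Vv_one]
  · rw [show (El12 x).1 0 1 = x from rfl]; exact hx
  · rw [show (El12 x).1 1 0 = 0 from rfl, ν.Vv_zero]; exact le_top
  · rw [show (El12 x).1 1 1 = 1 from rfl, DiscreteVal.Vv_one]

lemma El21_mem_U {x : E} (hx : ((0:ℤ) : WithTop ℤ) ≤ ν.Vv x) : El21 x ∈ slIntegral ν := by
  rw [mem_slIntegral_iff]
  rw [Fin.forall_fin_two]
  constructor <;> rw [Fin.forall_fin_two] <;> constructor
  · rw [show (El21 x).1 0 0 = 1 from rfl, DiscreteVal.Vv_one]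
  · rw [show (El21 x).1 0 1 = 0 from rfl, ν.Vv_zero]; exact le_top
  · rw [show (El21 x).1 1 0 = x from rfl]; exact hx
  · rw [show (El21 x).1 1 1 = 1 from rfl, DiscreteVal.Vv_one]

lemma Wmat_mem_U : (Wmat : SL2) ∈ slIntegral ν := by
  rw [mem_slIntegral_iff]
  rw [Fin.forall_fin_two]
  constructor <;> rw [Fin.forall_fin_two] <;> constructor
  · rw [show (Wmat : SL2).1 0 0 = 0 from rfl, ν.Vv_zero]; exact le_top
  · rw [show (Wmat : SL2).1 0 1 = 1 from rfl, DiscreteVal.Vv_one]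
  · rw [show (Wmat : SL2).1 1 0 = -1 from rfl, DiscreteVal.Vv_neg, DiscreteVal.Vv_one]
  · rw [show (Wmat : SL2).1 1 1 = 0 from rfl, ν.Vv_zero]; exact le_top

lemma Wcmat_mem_U' (hπ : ν.IsUniformizer π) : Wcmat π hπ.1 ∈ slConj ν π := by
  rw [mem_slConj_iff hπ]
  have hinv : ν.Vv π⁻¹ = ((-1:ℤ) : WithTop ℤ) := by
    rw [DiscreteVal.Vv_of_ne (inv_ne_zero hπ.1), DiscreteVal.v_inv hπ.1, hπ.2]
  have hpi : ν.Vv π = ((1:ℤ) : WithTop ℤ) := by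
    rw [DiscreteVal.Vv_of_ne hπ.1, hπ.2]
  refine ⟨?_, ?_, ?_, ?_⟩
  · rw [show (Wcmat π hπ.1).1 0 0 = 0 from rfl, ν.Vv_zero]; exact le_top
  · rw [show (Wcmat π hπ.1).1 1 1 = 0 from rfl, ν.Vv_zero]; exact le_top
  · rw [show (Wcmat π hπ.1).1 0 1 = π⁻¹ from rfl, hinv]
  · rw [show (Wcmat π hπ.1).1 1 0 = -π from rfl, DiscreteVal.Vv_neg, hpi]

/-- The subgroup generated by `U ∪ U'`. -/
def genGrp (ν' : DiscreteVal E) (π' : E) : Subgroup SL2 :=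
  Subgroup.closure (slIntegral ν' ∪ slConj ν' π')

lemma Wmat_mem_gen : (Wmat : SL2) ∈ genGrp ν π :=
  Subgroup.subset_closure (Or.inl Wmat_mem_U)

lemma Wcmat_mem_gen (hπ : ν.IsUniformizer π) : Wcmat π hπ.1 ∈ genGrp ν π :=
  Subgroup.subset_closure (Or.inr (Wcmat_mem_U' hπ))

lemma conj12 (hπ : π ≠ 0) (y : E) :
    Wcmat π hπ * Wminv * El12 (π * π * y) * (Wmat * Wcinv π hπ) = El12 y := by
  apply Subtype.ext
  simp only [Matrix.SpecialLinearGroup.coe_mul]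
  simp only [Wcmat, Wminv, El12, Wmat, Wcinv]
  ext i j
  fin_cases i <;> fin_cases j <;>
    (simp [Matrix.mul_apply, Fin.sum_univ_two]; try field_simp) <;> ring

lemma conj21 (hπ : π ≠ 0) (y : E) :
    Wmat * Wcinv π hπ * El21 (π * π * y) * (Wcmat π hπ * Wminv) = El21 y := by
  apply Subtype.ext
  simp only [Matrix.SpecialLinearGroup.coe_mul]
  simp only [Wcmat, Wminv, El21, Wmat, Wcinv]
  ext i j
  fin_cases i <;> fin_cases j <;>
    (simp [Matrix.mul_apply, Fin.sum_univ_two]; try field_simp) <;> ring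

lemma Vv_sq_mul (hπ : ν.IsUniformizer π) (x : E) (hx : x ≠ 0) :
    ν.v (π * π * x) = 2 + ν.v x := by
  rw [ν.v_mul _ x (mul_ne_zero hπ.1 hπ.1) hx, ν.v_mul _ _ hπ.1 hπ.1, hπ.2]
  ring

lemma El12_mem_gen (hπ : ν.IsUniformizer π) (x : E) : El12 x ∈ genGrp ν π := by
  rcases eq_or_ne x 0 with rfl | hx
  · exact Subgroup.subset_closure (Or.inl (El12_mem_U (by rw [ν.Vv_zero]; exact le_top)))
  suffices h : ∀ (k : ℕ) (y : E), y ≠ 0 → -(2 * (k:ℤ)) ≤ ν.v y → El12 y ∈ genGrp ν π by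
    exact h (ν.v x).natAbs x hx (by omega)
  intro k
  induction k with
  | zero =>
    intro y hy h0
    exact Subgroup.subset_closure (Or.inl (El12_mem_U (by
      rw [DiscreteVal.Vv_of_ne hy, WithTop.coe_le_coe]; omega)))
  | succ k ih =>
    intro y hy h0
    have h2 : El12 (π * π * y) ∈ genGrp ν π := by
      apply ih _ (mul_ne_zero (mul_ne_zero hπ.1 hπ.1) hy)
      rw [Vv_sq_mul hπ y hy]; push_cast; omega
    rw [← conj12 hπ.1 y]
    refine mul_mem (mul_mem (mul_mem (Wcmat_mem_gen hπ) ?_) h2)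
      (mul_mem (Wmat_mem_gen) ?_)
    · rw [← Wmat_inv]; exact inv_mem (Wmat_mem_gen)
    · rw [← Wcmat_inv hπ.1]; exact inv_mem (Wcmat_mem_gen hπ)

lemma El21_mem_gen (hπ : ν.IsUniformizer π) (x : E) : El21 x ∈ genGrp ν π := by
  rcases eq_or_ne x 0 with rfl | hx
  · exact Subgroup.subset_closure (Or.inl (El21_mem_U (by rw [ν.Vv_zero]; exact le_top)))
  suffices h : ∀ (k : ℕ) (y : E), y ≠ 0 → -(2 * (k:ℤ)) ≤ ν.v y → El21 y ∈ genGrp ν π by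
    exact h (ν.v x).natAbs x hx (by omega)
  intro k
  induction k with
  | zero =>
    intro y hy h0
    exact Subgroup.subset_closure (Or.inl (El21_mem_U (by
      rw [DiscreteVal.Vv_of_ne hy, WithTop.coe_le_coe]; omega)))
  | succ k ih =>
    intro y hy h0
    have h2 : El21 (π * π * y) ∈ genGrp ν π := by
      apply ih _ (mul_ne_zero (mul_ne_zero hπ.1 hπ.1) hy)
      rw [Vv_sq_mul hπ y hy]; push_cast; omega
    rw [← conj21 hπ.1 y]
    refine mul_mem (mul_mem (mul_mem Wmat_mem_gen ?_) h2) (mul_mem (Wcmat_mem_gen hπ) ?_)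
    · rw [← Wcmat_inv hπ.1]; exact inv_mem (Wcmat_mem_gen hπ)
    · rw [← Wmat_inv]; exact inv_mem Wmat_mem_gen

lemma decompC {g : SL2} (hc : g.1 1 0 ≠ 0) :
    g = El12 ((g.1 0 0 - 1) / g.1 1 0) * El21 (g.1 1 0) * El12 ((g.1 1 1 - 1) / g.1 1 0) := by
  have hdet := detEq g
  apply Subtype.ext
  ext i j
  rw [Matrix.SpecialLinearGroup.coe_mul, Matrix.SpecialLinearGroup.coe_mul]
  fin_cases i <;> fin_cases j <;>
    simp only [El12, El21, Matrix.mul_apply, Fin.sum_univ_two, Matrix.cons_val',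
      Matrix.cons_val_zero, Matrix.cons_val_one, Matrix.head_cons, Matrix.empty_val',
      Matrix.cons_val_fin_one, Matrix.head_fin_const, Fin.zero_eta, Fin.mk_one, Fin.isValue, Matrix.of_apply]
  · field_simp; ring
  · field_simp; linear_combination -hdet
  · field_simp; ring
  · field_simp; ring

lemma mem_gen_all (hπ : ν.IsUniformizer π) (g : SL2) : g ∈ genGrp ν π := by
  by_cases hc : g.1 1 0 ≠ 0
  · rw [decompC hc]
    exact mul_mem (mul_mem (El12_mem_gen hπ _) (El21_mem_gen hπ _)) (El12_mem_gen hπ _)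
  · push_neg at hc
    have ha : (El21 1 * g).1 1 0 ≠ 0 := by
      rw [mul_entry]
      rw [show (El21 (1:E)).1 1 0 = 1 from rfl, show (El21 (1:E)).1 1 1 = 1 from rfl, hc]
      have hdet := detEq g
      rw [hc] at hdet
      intro hzero
      rw [mul_zero, add_zero, one_mul] at hzero
      rw [hzero] at hdet
      norm_num at hdet
    have h1 : El21 1 * g ∈ genGrp ν π := by
      rw [decompC ha]
      exact mul_mem (mul_mem (El12_mem_gen hπ _) (El21_mem_gen hπ _)) (El12_mem_gen hπ _)
    have : g = (El21 (1:E))⁻¹ * (El21 1 * g) := by rw [← mul_assoc, inv_mul_cancel, one_mul]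
    rw [this]
    exact mul_mem (inv_mem (El21_mem_gen hπ 1)) h1

end Aux5

section Aux6

local notation "SL2" => Matrix.SpecialLinearGroup (Fin 2) E

variable {ν : DiscreteVal E} {π : E} {Λ : Type} [CommRing Λ]

/-- mapDomain of a negation. -/
lemma mapDomain_neg' {α β : Type} (k : α → β) (h : α →₀ Λ) :
    Finsupp.mapDomain k (-h) = - Finsupp.mapDomain k h :=
  (Finsupp.mapDomain.addMonoidHom k).map_neg h

lemma delta_zero : deltaMap Λ ν π 0 = 0 := by
  simp [deltaMap, Finsupp.mapDomain_zero]

lemma delta_add (f g : CosetSpace (slIntegral ν ∩ slConj ν π) →₀ Λ) :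
    deltaMap Λ ν π (f + g) = deltaMap Λ ν π f + deltaMap Λ ν π g := by
  simp only [deltaMap, Finsupp.mapDomain_add, Prod.mk_add_mk]
  rw [neg_add]

lemma delta_neg (f : CosetSpace (slIntegral ν ∩ slConj ν π) →₀ Λ) :
    deltaMap Λ ν π (-f) = - deltaMap Λ ν π f := by
  simp only [deltaMap, mapDomain_neg', Prod.neg_mk, neg_neg]

lemma delta_sub (f g : CosetSpace (slIntegral ν ∩ slConj ν π) →₀ Λ) :
    deltaMap Λ ν π (f - g) = deltaMap Λ ν π f - deltaMap Λ ν π g := by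
  rw [sub_eq_add_neg, delta_add, delta_neg, ← sub_eq_add_neg]

lemma delta_single (g : SL2) (c : Λ) :
    deltaMap Λ ν π (Finsupp.single (cosetMk (slIntegral ν ∩ slConj ν π) g) c) =
      (Finsupp.single (cosetMk (slIntegral ν) g) c,
        - Finsupp.single (cosetMk (slConj ν π) g) c) := by
  unfold deltaMap
  rw [Finsupp.mapDomain_single, Finsupp.mapDomain_single, projToU_mk, projToU'_mk]

/-- The property that the `U`-vertex of `g` is connected to the base vertex. -/
def Pg (ν : DiscreteVal E) (π : E) (Λ : Type) [CommRing Λ] (g : SL2) : Prop :=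
  ∀ c : Λ, ∃ f, deltaMap Λ ν π f =
    (Finsupp.single (cosetMk (slIntegral ν) g) c -
      Finsupp.single (cosetMk (slIntegral ν) 1) c, 0)

lemma Pg_one : Pg ν π Λ 1 := by
  intro c
  exact ⟨0, by rw [delta_zero, sub_self]; rfl⟩

lemma Pg_iff_U {h : SL2} (hh : h ∈ slIntegral ν) (g : SL2) :
    Pg ν π Λ g ↔ Pg ν π Λ (h * g) := by
  have : cosetMk (slIntegral ν) g = cosetMk (slIntegral ν) (h * g) :=
    Quot.sound ⟨h, hh, rfl⟩
  unfold Pg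
  rw [this]

lemma Pg_of_U' (hπ : ν.IsUniformizer π) {h : SL2} (hh : h ∈ slConj ν π) (g : SL2)
    (hP : Pg ν π Λ g) : Pg ν π Λ (h * g) := by
  intro c
  obtain ⟨f, hf⟩ := hP c
  have hcos : cosetMk (slConj ν π) g = cosetMk (slConj ν π) (h * g) :=
    Quot.sound ⟨h, hh, rfl⟩
  refine ⟨f + Finsupp.single (cosetMk (slIntegral ν ∩ slConj ν π) (h * g)) c
      - Finsupp.single (cosetMk (slIntegral ν ∩ slConj ν π) g) c, ?_⟩
  rw [delta_sub, delta_add, delta_single, delta_single, hf]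
  refine Prod.ext ?_ ?_
  · simp only [Prod.fst_add, Prod.fst_sub]
    abel
  · simp only [Prod.snd_add, Prod.snd_sub, hcos]
    abel

lemma Pg_iff_U' (hπ : ν.IsUniformizer π) {h : SL2} (hh : h ∈ slConj ν π) (g : SL2) :
    Pg ν π Λ g ↔ Pg ν π Λ (h * g) := by
  constructor
  · exact Pg_of_U' hπ hh g
  · intro hP
    have := Pg_of_U' hπ (slConj_inv hπ hh) (h * g) hP
    rwa [inv_mul_cancel_left] at this

lemma Pg_all (hπ : ν.IsUniformizer π) (g : SL2) : Pg ν π Λ g := by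
  have key : ∀ x ∈ genGrp ν π, ∀ g' : SL2, Pg ν π Λ g' ↔ Pg ν π Λ (x * g') := by
    intro x hx
    induction hx using Subgroup.closure_induction with
    | mem y hy =>
      rcases hy with hy | hy
      · exact fun g' => Pg_iff_U hy g'
      · exact fun g' => Pg_iff_U' hπ hy g'
    | one => intro g'; rw [one_mul]
    | mul y z _ _ hy hz =>
      intro g'
      rw [mul_assoc]
      exact (hz g').trans (hy (z * g'))
    | inv y _ hy =>
      intro g'
      have := (hy (y⁻¹ * g')).symm
      rwa [mul_inv_cancel_left] at this
  have := (key g (mem_gen_all hπ g) 1).1 Pg_one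
  rwa [mul_one] at this

/-- The total-sum homomorphism. -/
def SumHom (α : Type) (Λ : Type) [CommRing Λ] : (α →₀ Λ) →+ Λ where
  toFun x := x.sum fun _ a => a
  map_zero' := Finsupp.sum_zero_index
  map_add' f g := by
    show (f + g).sum (fun _ a => a) = f.sum (fun _ a => a) + g.sum (fun _ a => a)
    exact Finsupp.sum_add_index' (fun _ => rfl) (fun _ _ _ => rfl)

lemma sumv_def {α : Type} (x : α →₀ Λ) : (x.sum fun _ a => a) = SumHom α Λ x := by
  rfl

lemma sumv_mapDomain {α β : Type} (p : α → β) (h : α →₀ Λ) :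
    ((Finsupp.mapDomain p h).sum fun _ a => a) = h.sum fun _ a => a :=
  Finsupp.sum_mapDomain_index (fun _ => rfl) (fun _ _ _ => rfl)

lemma sigma_delta (f : CosetSpace (slIntegral ν ∩ slConj ν π) →₀ Λ) :
    sigmaMap Λ ν π (deltaMap Λ ν π f) = 0 := by
  unfold sigmaMap deltaMap
  rw [sumv_def, sumv_def, map_neg, ← sumv_def, ← sumv_def, sumv_mapDomain, sumv_mapDomain]
  ring

lemma sum_single' {α : Type} (a : α) (c : Λ) :
    ((Finsupp.single a c).sum fun _ x => x) = c :=
  Finsupp.sum_single_index rfl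

lemma claim1 (hπ : ν.IsUniformizer π) (w : CosetSpace (slConj ν π) →₀ Λ) :
    ∃ f u, deltaMap Λ ν π f = (u, w) := by
  induction w using Finsupp.induction with
  | zero => exact ⟨0, 0, by rw [delta_zero]; rfl⟩
  | single_add q b w' hq hb ih =>
    obtain ⟨f', u', hfu⟩ := ih
    obtain ⟨g, hg⟩ := Quot.exists_rep q
    refine ⟨Finsupp.single (cosetMk (slIntegral ν ∩ slConj ν π) g) (-b) + f',
      Finsupp.single (cosetMk (slIntegral ν) g) (-b) + u', ?_⟩
    rw [delta_add, delta_single, hfu, Prod.mk_add_mk]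
    refine Prod.ext rfl ?_
    show - Finsupp.single (cosetMk (slConj ν π) g) (-b) + w' = _
    rw [Finsupp.single_neg, neg_neg, show cosetMk (slConj ν π) g = q from hg]

lemma claim2 (hπ : ν.IsUniformizer π) (u : CosetSpace (slIntegral ν) →₀ Λ) :
    ∃ f c, deltaMap Λ ν π f =
      (u - Finsupp.single (cosetMk (slIntegral ν) 1) c, 0) := by
  induction u using Finsupp.induction with
  | zero =>
    refine ⟨0, 0, ?_⟩
    rw [delta_zero, Finsupp.single_zero, sub_zero]
    rfl
  | single_add p b u' hp hb ih =>
    obtain ⟨f', c', hf'⟩ := ih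
    obtain ⟨g, hg⟩ := Quot.exists_rep p
    obtain ⟨f0, hf0⟩ := Pg_all (Λ := Λ) hπ g b
    refine ⟨f0 + f', b + c', ?_⟩
    rw [delta_add, hf0, hf', Prod.mk_add_mk]
    refine Prod.ext ?_ ?_
    · show (Finsupp.single (cosetMk (slIntegral ν) g) b -
        Finsupp.single (cosetMk (slIntegral ν) 1) b) +
        (u' - Finsupp.single (cosetMk (slIntegral ν) 1) c') = _
      rw [show cosetMk (slIntegral ν) g = p from hg, Finsupp.single_add]
      abel
    · show (0 : CosetSpace (slConj ν π) →₀ Λ) + 0 = 0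
      rw [add_zero]

end Aux6

theorem bruhatTits_chain_complex_exact
    (ν : DiscreteVal E) (π : E) (hπ : ν.IsUniformizer π)
    (Λ : Type) [CommRing Λ] :
    -- δ is given on indicator functions as described
    (∀ g : SpecialLinearGroup (Fin 2) E,
      deltaMap Λ ν π (Finsupp.single (cosetMk (slIntegral ν ∩ slConj ν π) g) (1 : Λ)) =
        (Finsupp.single (cosetMk (slIntegral ν) g) (1 : Λ),
          - Finsupp.single (cosetMk (slConj ν π) g) (1 : Λ))) ∧
    -- exactness at the left: δ is injective
    Function.Injective (deltaMap Λ ν π) ∧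
    -- exactness in the middle: ker Σ = im δ
    (∀ x : (CosetSpace (slIntegral ν) →₀ Λ) × (CosetSpace (slConj ν π) →₀ Λ),
      sigmaMap Λ ν π x = 0 ↔ ∃ f, deltaMap Λ ν π f = x) ∧
    -- exactness at the right: Σ is surjective
    Function.Surjective (sigmaMap Λ ν π) ∧
    -- δ is G-equivariant
    (∀ (g₀ : SpecialLinearGroup (Fin 2) E)
        (f : CosetSpace (slIntegral ν ∩ slConj ν π) →₀ Λ),
      deltaMap Λ ν π (transF Λ _ g₀ f) =
        (transF Λ _ g₀ (deltaMap Λ ν π f).1, transF Λ _ g₀ (deltaMap Λ ν π f).2)) ∧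
    -- Σ is G-equivariant (G acting trivially on Λ)
    (∀ (g₀ : SpecialLinearGroup (Fin 2) E)
        (x : (CosetSpace (slIntegral ν) →₀ Λ) × (CosetSpace (slConj ν π) →₀ Λ)),
      sigmaMap Λ ν π (transF Λ _ g₀ x.1, transF Λ _ g₀ x.2) = sigmaMap Λ ν π x) := by
  refine ⟨fun g => delta_single g 1, ?_, ?_, ?_, ?_, ?_⟩
  · -- injectivity of δ
    intro f f' h
    have h0 : deltaMap Λ ν π (f - f') = 0 := by rw [delta_sub, h, sub_self]
    unfold deltaMap at h0
    rw [Prod.mk_eq_zero] at h0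
    exact sub_eq_zero.1 (delta_ker hπ (f - f') h0.1 (neg_eq_zero.1 h0.2))
  · -- middle exactness
    intro x
    constructor
    · intro hx
      obtain ⟨f1, u, h1⟩ := claim1 hπ x.2
      obtain ⟨f2, c, h2⟩ := claim2 hπ (x.1 - u)
      have hδ : deltaMap Λ ν π (f1 + f2) =
          (x.1 - Finsupp.single (cosetMk (slIntegral ν) 1) c, x.2) := by
        rw [delta_add, h1, h2, Prod.mk_add_mk]
        refine Prod.ext ?_ ?_
        · show u + (x.1 - u - _) = _
          abel
        · show x.2 + 0 = x.2
          rw [add_zero]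
      have hs := sigma_delta (f1 + f2)
      rw [hδ] at hs
      unfold sigmaMap at hs hx
      rw [sumv_def (x.1 - _), map_sub, ← sumv_def, ← sumv_def, sum_single'] at hs
      have hc : c = 0 := by linear_combination hx - hs
      rw [hc, Finsupp.single_zero, sub_zero] at hδ
      exact ⟨f1 + f2, by rw [hδ]⟩
    · rintro ⟨f, rfl⟩
      exact sigma_delta f
  · -- surjectivity of Σ
    intro c
    refine ⟨(Finsupp.single (cosetMk (slIntegral ν) 1) c, 0), ?_⟩
    unfold sigmaMap
    rw [sum_single', Finsupp.sum_zero_index, add_zero]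
  · -- equivariance of δ
    intro g₀ f
    have c1 : (projToU ν π) ∘ (cosetTrans (slIntegral ν ∩ slConj ν π) g₀) =
        (cosetTrans (slIntegral ν) g₀) ∘ (projToU ν π) := by
      funext s
      exact Quot.inductionOn s fun g => rfl
    have c2 : (projToU' ν π) ∘ (cosetTrans (slIntegral ν ∩ slConj ν π) g₀) =
        (cosetTrans (slConj ν π) g₀) ∘ (projToU' ν π) := by
      funext s
      exact Quot.inductionOn s fun g => rfl
    unfold deltaMap transF
    refine Prod.ext ?_ ?_
    · show Finsupp.mapDomain _ (Finsupp.mapDomain _ f) = Finsupp.mapDomain _ (Finsupp.mapDomain _ f)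
      rw [← Finsupp.mapDomain_comp, ← Finsupp.mapDomain_comp, c1]
    · show - Finsupp.mapDomain _ (Finsupp.mapDomain _ f) =
        Finsupp.mapDomain _ (- Finsupp.mapDomain _ f)
      rw [mapDomain_neg', ← Finsupp.mapDomain_comp, ← Finsupp.mapDomain_comp, c2]
  · -- equivariance of Σ
    intro g₀ x
    unfold sigmaMap transF
    rw [sumv_mapDomain, sumv_mapDomain]

end Statement12
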